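/- arXiv:1408.5328 — 4 statements merged into one kernel-verified Lean document; each statement's English description precedes it below -/
import Mathlib

section
/- The entropy variance of the geometric distribution p(n) = (1/(N+1))(N/(N+1))^n, i.e., Var(−log p(n)), equals v(N) := N(N+1)[log(N+1) − log N]². -/
open Real

lemma hasSum_sq_mul_geometric {q : ℝ} (h0 : 0 ≤ q) (h1 : q < 1) :
    HasSum (fun n : ℕ => (n : ℝ) ^ 2 * q ^ n) (q * (1 + q) / (1 - q) ^ 3) := by
  have hq : ‖q‖ < 1 := by rwa [Real.norm_eq_abs, abs_of_nonneg h0]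
  have A := hasSum_choose_mul_geometric_of_norm_lt_one (𝕜 := ℝ) 2 hq
  have B := hasSum_coe_mul_geometric_of_norm_lt_one (𝕜 := ℝ) hq
  have C := hasSum_geometric_of_norm_lt_one (ξ := q) hq
  have key := ((A.mul_left 2).sub (B.mul_left 3)).sub (C.mul_left 2)
  have hne : (1 : ℝ) - q ≠ 0 := by linarith
  convert key using 1
  · rfl
  · funext n
    have h2 : ((n + 2).choose 2 : ℕ) * 2 = (n + 2) * (n + 1) := by
      rw [Nat.choose_two_right, show n + 2 - 1 = n + 1 from rfl,
        show (n + 2) * (n + 1) = (n + 1) * (n + 2) from Nat.mul_comm _ _,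
        Nat.div_mul_cancel (Nat.even_mul_succ_self (n + 1)).two_dvd]
    have h2' : ((n + 2).choose 2 : ℝ) * 2 = ((n : ℝ) + 2) * ((n : ℝ) + 1) := by
      exact_mod_cast congrArg (Nat.cast : ℕ → ℝ) h2
    have h3 : ((n + 2).choose 2 : ℝ) = ((n : ℝ) ^ 2 + 3 * n + 2) / 2 := by linarith
    rw [h3]; ring
  · field_simp
    ring

/-- The entropy variance `Var(−log p(Z))` of the geometric distribution
`p n = (1/(N+1)) * (N/(N+1))^n` equals `v(N) = N(N+1)[log(N+1) − log N]²`. -/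
theorem geometric_entropy_variance (N : ℝ) (hN : 0 < N)
    (p : ℕ → ℝ) (hp : ∀ n, p n = (1 / (N + 1)) * (N / (N + 1)) ^ n)
    (H : ℝ) (hH : H = ∑' n : ℕ, p n * (-Real.log (p n))) :
    (∑' n : ℕ, p n * (-Real.log (p n) - H) ^ 2) =
      N * (N + 1) * (Real.log (N + 1) - Real.log N) ^ 2 := by
  have hN1 : (0:ℝ) < N + 1 := by linarith
  set q : ℝ := N / (N + 1) with hqdef
  have hq0 : 0 ≤ q := by positivity
  have hq1 : q < 1 := by
    rw [hqdef, div_lt_one hN1]; linarith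
  have hqn : ‖q‖ < 1 := by rwa [Real.norm_eq_abs, abs_of_nonneg hq0]
  set L : ℝ := Real.log (N + 1) - Real.log N with hL
  set c : ℝ := Real.log (N + 1) with hc
  -- log formula
  have hlog : ∀ n : ℕ, -Real.log (p n) = c + n * L := by
    intro n
    rw [hp n, Real.log_mul (by positivity) (by positivity),
      Real.log_pow, Real.log_div (by positivity) (by positivity),
      Real.log_div (ne_of_gt hN) (ne_of_gt hN1), Real.log_one]
    ring
  have hne : (1 : ℝ) - q ≠ 0 := by linarith
  -- basic sums
  have S0 : HasSum (fun n : ℕ => q ^ n) (N + 1) := by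
    have := hasSum_geometric_of_norm_lt_one hqn
    convert this using 1
    · rfl
    rw [hqdef]; field_simp; ring
  have S1 : HasSum (fun n : ℕ => (n : ℝ) * q ^ n) (N * (N + 1)) := by
    have := hasSum_coe_mul_geometric_of_norm_lt_one hqn
    convert this using 1
    · rfl
    rw [hqdef]; field_simp; ring
  have S2 : HasSum (fun n : ℕ => (n : ℝ) ^ 2 * q ^ n) (N * (N + 1) * (2 * N + 1)) := by
    have := hasSum_sq_mul_geometric hq0 hq1
    convert this using 1
    rw [hqdef]; field_simp; ring
  -- sums against p
  have hpn : ∀ n, p n = (1 / (N + 1)) * q ^ n := hp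
  have P0 : HasSum p 1 := by
    have := S0.mul_left (1 / (N + 1))
    convert this using 1
    · rfl
    · funext n; rw [hpn n]
    · field_simp
  have P1 : HasSum (fun n : ℕ => (n : ℝ) * p n) N := by
    have := S1.mul_left (1 / (N + 1))
    convert this using 1
    · rfl
    · funext n; rw [hpn n]; ring
    · field_simp
  have P2 : HasSum (fun n : ℕ => (n : ℝ) ^ 2 * p n) (N * (2 * N + 1)) := by
    have := S2.mul_left (1 / (N + 1))
    convert this using 1
    · rfl
    · funext n; rw [hpn n]; ring
    · field_simp
  -- entropy value
  have hHsum : HasSum (fun n : ℕ => p n * (-Real.log (p n))) (c + N * L) := by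
    have := (P0.mul_left c).add (P1.mul_left L)
    convert this using 1
    · rfl
    · funext n; rw [hlog n]; ring
    · ring
  have hHval : H = c + N * L := by rw [hH, hHsum.tsum_eq]
  -- variance
  have V : HasSum (fun n : ℕ => p n * (-Real.log (p n) - H) ^ 2)
      (N * (N + 1) * L ^ 2) := by
    have := ((P2.mul_left (L ^ 2)).sub (P1.mul_left (2 * N * L ^ 2))).add
      (P0.mul_left (N ^ 2 * L ^ 2))
    convert this using 1
    · rfl
    · funext n; rw [hlog n, hHval]; ring
    · ring
  rw [V.tsum_eq]
end

section
/- For N_S > 0, the binary entropy h₂((1 − e^{−2N_S})/2) (the BPSK Holevo capacity in nats) has the expansion −N_S ln N_S + N_S + N_S² ln N_S + o(N_S² ln N_S) as N_S → 0⁺; in particular, h₂((1 − e^{−2N_S})/2) + N_S ln N_S − N_S → 0 as N_S → 0⁺. -/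
open Filter Asymptotics

noncomputable def h₂ (x : ℝ) : ℝ := -x * Real.log x - (1 - x) * Real.log (1 - x)

lemma aux_log_one_add {u : ℝ} (h : |u| ≤ 1/2) : |Real.log (1+u)| ≤ 2 * |u| := by
  have h1 : |(-u)| < 1 := by rw [abs_neg]; linarith [abs_nonneg u]
  have h2 := Real.abs_log_sub_add_sum_range_le h1 0
  simp only [Finset.range_zero, Finset.sum_empty, zero_add, pow_one, abs_neg,
    sub_neg_eq_add] at h2
  have h3 : (1:ℝ)/2 ≤ 1 - |u| := by linarith
  calc |Real.log (1+u)| ≤ |u| / (1 - |u|) := h2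
    _ ≤ 2 * |u| := by
        rw [div_le_iff₀ (by linarith [abs_nonneg u] : (0:ℝ) < 1 - |u|)]
        nlinarith [abs_nonneg u]

lemma aux_log_one_sub {p : ℝ} (h0 : 0 ≤ p) (h : p ≤ 1/2) :
    |Real.log (1-p) + p| ≤ 2 * p^2 := by
  have h1 : |p| < 1 := by rw [abs_of_nonneg h0]; linarith
  have h2 := Real.abs_log_sub_add_sum_range_le h1 1
  simp only [Finset.sum_range_one, pow_one, Nat.cast_zero, zero_add, div_one] at h2
  rw [abs_of_nonneg h0] at h2
  have h2' : |p + Real.log (1-p)| ≤ p^2 / (1-p) := by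
    convert h2 using 2 <;> ring
  calc |Real.log (1-p) + p| = |p + Real.log (1-p)| := by rw [add_comm]
    _ ≤ p^2 / (1-p) := h2'
    _ ≤ 2 * p^2 := by
        rw [div_le_iff₀ (by linarith : (0:ℝ) < 1 - p)]
        nlinarith

set_option maxHeartbeats 1000000 in
lemma key_bound {N : ℝ} (h0 : 0 < N) (h1 : N ≤ 1/4) :
    |h₂ ((1 - Real.exp (-2 * N)) / 2) - (-(N * Real.log N) + N + N ^ 2 * Real.log N)|
      ≤ N^3 * (-Real.log N) + 9 * N^2 := by
  set E := Real.exp (-2 * N) with hE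
  set p := (1 - E) / 2 with hp
  have hE0 : 0 < E := Real.exp_pos _
  have hE1 : E < 1 := Real.exp_lt_one_iff.mpr (by linarith)
  have hEge : 1 - 2*N ≤ E := by
    have := Real.add_one_le_exp (-2 * N); linarith
  have hp0 : 0 < p := by rw [hp]; linarith
  have hpN : p ≤ N := by rw [hp]; linarith
  have hphalf : p < 1/2 := by rw [hp]; linarith
  -- Taylor bound on exp
  have hB1 : |E - (1 - 2*N + 2*N^2)| ≤ 16/9 * N^3 := by
    have hx : |(-2*N)| ≤ 1 := by rw [abs_of_nonpos (by linarith)]; linarith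
    have := Real.exp_bound hx (n := 3) (by norm_num)
    have hsum : (∑ m ∈ Finset.range 3, (-2*N) ^ m / (m.factorial : ℝ))
        = 1 - 2*N + 2*N^2 := by
      simp [Finset.sum_range_succ, Nat.factorial]
      ring
    rw [hsum] at this
    have habs : |(-2*N)| = 2*N := by rw [abs_of_nonpos (by linarith)]; ring
    rw [habs] at this
    calc |E - (1 - 2*N + 2*N^2)| ≤ (2*N)^3 * ((3:ℕ).succ / ((3:ℕ).factorial * 3)) := this
      _ = 16/9 * N^3 := by norm_num [Nat.factorial]; ring
  have hB2 : |p - N + N^2| ≤ 8/9 * N^3 := by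
    have : p - N + N^2 = -(E - (1 - 2*N + 2*N^2))/2 := by rw [hp]; ring
    rw [this, abs_div, abs_neg, abs_of_pos (by norm_num : (0:ℝ) < 2)]
    linarith
  have hB3 : |p - N| ≤ 2 * N^2 := by
    have h2 := abs_le.mp hB2
    rw [abs_le]
    constructor <;> nlinarith
  -- log of p/N
  have hNne : N ≠ 0 := ne_of_gt h0
  have hq : p / N = 1 + (p - N)/N := by field_simp; ring
  have hu : |(p - N)/N| ≤ 1/2 := by
    rw [abs_div, abs_of_pos h0, div_le_iff₀ h0]
    calc |p - N| ≤ 2 * N^2 := hB3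
      _ ≤ 1/2 * N := by nlinarith
  have hlogq : |Real.log (p/N)| ≤ 4 * N := by
    rw [hq]
    calc |Real.log (1 + (p-N)/N)| ≤ 2 * |(p-N)/N| := aux_log_one_add hu
      _ ≤ 4 * N := by
          rw [abs_div, abs_of_pos h0]
          have h4 : |p - N| / N ≤ 2 * N := by
            rw [div_le_iff₀ h0]; nlinarith
          linarith
  have hlog1p : |Real.log (1-p) + p| ≤ 2 * N^2 := by
    calc |Real.log (1-p) + p| ≤ 2 * p^2 := aux_log_one_sub hp0.le (le_of_lt hphalf)
      _ ≤ 2 * N^2 := by nlinarith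
  -- decompose
  have hlogp : Real.log p = Real.log N + Real.log (p/N) := by
    rw [Real.log_div (ne_of_gt hp0) hNne]; ring
  have hlogN : Real.log N < 0 := Real.log_neg h0 (by linarith)
  set L := Real.log (p/N) with hL
  set M := Real.log (1-p) with hM
  have hdecomp : h₂ p - (-(N * Real.log N) + N + N ^ 2 * Real.log N)
      = (N - N^2 - p) * Real.log N + (-(p * L)) + (-((1-p) * (M + p)))
        + (p - N) + (-(p^2)) := by
    unfold h₂
    rw [hlogp]
    ring
  rw [hdecomp]
  have bA : |(N - N^2 - p) * Real.log N| ≤ 8/9 * N^3 * (-Real.log N) := by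
    rw [abs_mul, abs_of_neg hlogN]
    have : |N - N^2 - p| ≤ 8/9 * N^3 := by
      rw [show N - N^2 - p = -(p - N + N^2) by ring, abs_neg]; exact hB2
    nlinarith [abs_nonneg (N - N^2 - p), neg_pos.mpr hlogN]
  have bB : |(-(p * L))| ≤ 4 * N^2 := by
    rw [abs_neg, abs_mul, abs_of_pos hp0]
    calc p * |L| ≤ N * (4*N) := by
          apply mul_le_mul hpN hlogq (abs_nonneg _) h0.le
      _ = 4 * N^2 := by ring
  have bC : |(-((1-p) * (M + p)))| ≤ 2 * N^2 := by
    rw [abs_neg, abs_mul]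
    have h1p : |1 - p| ≤ 1 := by rw [abs_of_pos (by linarith)]; linarith
    calc |1-p| * |M + p| ≤ 1 * (2 * N^2) :=
          mul_le_mul h1p hlog1p (abs_nonneg _) (by norm_num)
      _ = 2 * N^2 := by ring
  have bE : |(-(p^2))| ≤ N^2 := by
    rw [abs_neg, abs_of_nonneg (sq_nonneg p)]; nlinarith
  have hlogNpos : 0 ≤ -Real.log N := by linarith
  have tri : |(N - N^2 - p) * Real.log N + (-(p * L)) + (-((1-p) * (M + p))) + (p - N) + (-(p^2))|
      ≤ |(N - N^2 - p) * Real.log N| + |(-(p * L))| + |(-((1-p) * (M + p)))| + |p - N| + |(-(p^2))| := by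
    have t1 := abs_add_le ((N - N^2 - p) * Real.log N + (-(p * L)) + (-((1-p) * (M + p))) + (p - N)) (-(p^2))
    have t2 := abs_add_le ((N - N^2 - p) * Real.log N + (-(p * L)) + (-((1-p) * (M + p)))) (p - N)
    have t3 := abs_add_le ((N - N^2 - p) * Real.log N + (-(p * L))) (-((1-p) * (M + p)))
    have t4 := abs_add_le ((N - N^2 - p) * Real.log N) (-(p * L))
    linarith
  calc |(N - N^2 - p) * Real.log N + (-(p * L)) + (-((1-p) * (M + p))) + (p - N) + (-(p^2))|
      ≤ |(N - N^2 - p) * Real.log N| + |(-(p * L))| + |(-((1-p) * (M + p)))| + |p - N| + |(-(p^2))| := tri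
    _ ≤ 8/9 * N^3 * (-Real.log N) + 4*N^2 + 2*N^2 + 2*N^2 + N^2 := by
        linarith [bA, bB, bC, hB3, bE]
    _ ≤ N^3 * (-Real.log N) + 9 * N^2 := by
        have h9 : 8/9 * N^3 * (-Real.log N) ≤ N^3 * (-Real.log N) := by
          apply mul_le_mul_of_nonneg_right _ hlogNpos
          nlinarith
        linarith

/-- The BPSK Holevo capacity `h₂((1 − e^{−2N_S})/2)` (in nats) has expansion
`−N_S ln N_S + N_S + N_S² ln N_S + o(N_S² ln N_S)` as `N_S → 0⁺`; in particular
`h₂((1 − e^{−2N_S})/2) + N_S ln N_S − N_S → 0` as `N_S → 0⁺`. -/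
theorem bpsk_holevo_expansion :
    ((fun N : ℝ =>
        h₂ ((1 - Real.exp (-2 * N)) / 2) -
          (-(N * Real.log N) + N + N ^ 2 * Real.log N))
      =o[nhdsWithin 0 (Set.Ioi 0)] (fun N : ℝ => N ^ 2 * Real.log N)) ∧
    Tendsto (fun N : ℝ => h₂ ((1 - Real.exp (-2 * N)) / 2) + N * Real.log N - N)
      (nhdsWithin 0 (Set.Ioi 0)) (nhds 0) := by
  have hmem : Set.Ioo (0:ℝ) (1/4) ∈ nhdsWithin (0:ℝ) (Set.Ioi 0) :=
    Ioo_mem_nhdsGT_of_mem (by norm_num : (0:ℝ) ∈ Set.Ico (0:ℝ) (1/4))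
  have hlt (N : ℝ) (hN : N ∈ Set.Ioo (0:ℝ) (1/4)) : Real.log N < 0 :=
    Real.log_neg hN.1 (by linarith [hN.2])
  have hglim : Tendsto (fun N : ℝ => N ^ 2 * Real.log N) (nhdsWithin 0 (Set.Ioi 0)) (nhds 0) := by
    have h := tendsto_log_mul_rpow_nhdsGT_zero (r := 2) (by norm_num)
    have : Tendsto (fun N : ℝ => Real.log N * N ^ (2:ℕ)) (nhdsWithin 0 (Set.Ioi 0)) (nhds 0) := by
      refine h.congr' ?_
      filter_upwards [self_mem_nhdsWithin] with x hx
      rw [← Real.rpow_natCast x 2]; norm_num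
    exact this.congr (fun N => by ring)
  have hO : ((fun N : ℝ =>
        h₂ ((1 - Real.exp (-2 * N)) / 2) -
          (-(N * Real.log N) + N + N ^ 2 * Real.log N))
      =o[nhdsWithin 0 (Set.Ioi 0)] (fun N : ℝ => N ^ 2 * Real.log N)) := by
    rw [Asymptotics.isLittleO_iff_tendsto']
    · -- the quotient tends to 0
      apply squeeze_zero_norm' (a := fun N : ℝ => N + 9 * (-Real.log N)⁻¹)
      · filter_upwards [hmem] with N hN
        have h0 : 0 < N := hN.1
        have h1 : N ≤ 1/4 := le_of_lt hN.2
        have hlN : Real.log N < 0 := hlt N hN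
        have hd : 0 < N^2 * (-Real.log N) := mul_pos (pow_pos h0 2) (neg_pos.mpr hlN)
        have hkey := key_bound h0 h1
        rw [Real.norm_eq_abs, abs_div]
        have habsg : |N ^ 2 * Real.log N| = N^2 * (-Real.log N) := by
          rw [abs_mul, abs_of_pos (pow_pos h0 2), abs_of_neg hlN]
        rw [habsg, div_le_iff₀ hd]
        have hy0 : (-Real.log N) ≠ 0 := ne_of_gt (by linarith)
        have hexp : (N + 9 * (-Real.log N)⁻¹) * (N^2 * (-Real.log N))
            = N^3 * (-Real.log N) + 9 * N^2 * ((-Real.log N) * (-Real.log N)⁻¹) := by ring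
        rw [hexp, mul_inv_cancel₀ hy0, mul_one]
        exact hkey
      · have h1 : Tendsto (fun N : ℝ => N) (nhdsWithin (0:ℝ) (Set.Ioi 0)) (nhds 0) :=
          tendsto_id.mono_left nhdsWithin_le_nhds
        have h2 : Tendsto (fun N : ℝ => -Real.log N) (nhdsWithin (0:ℝ) (Set.Ioi 0)) atTop :=
          tendsto_neg_atBot_atTop.comp Real.tendsto_log_nhdsGT_zero
        have h3 : Tendsto (fun N : ℝ => (-Real.log N)⁻¹) (nhdsWithin (0:ℝ) (Set.Ioi 0)) (nhds 0) :=
          h2.inv_tendsto_atTop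
        have := h1.add ((h3.const_mul (9:ℝ)))
        simpa using this
    · filter_upwards [hmem] with N hN h
      exfalso
      have h0 : 0 < N := hN.1
      have hlN : Real.log N < 0 := hlt N hN
      have : N ^ 2 * Real.log N < 0 := mul_neg_of_pos_of_neg (by positivity) hlN
      rw [h] at this; exact lt_irrefl 0 this
  refine ⟨hO, ?_⟩
  have hf0 : Tendsto (fun N : ℝ =>
        h₂ ((1 - Real.exp (-2 * N)) / 2) -
          (-(N * Real.log N) + N + N ^ 2 * Real.log N))
      (nhdsWithin 0 (Set.Ioi 0)) (nhds 0) := hO.isBigO.trans_tendsto hglim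
  have := hf0.add hglim
  simp only [add_zero] at this
  refine this.congr (fun N => ?_)
  ring
end

section
/- For the minimum-error discrimination of BPSK coherent states, the cross-over probability ε = [1 − √(1 − e^{−4N_S})]/2 satisfies: the capacity C₁ = ln 2 − h₂(ε) of the induced binary symmetric channel obeys C₁/N_S → 2 as N_S → 0⁺ (in nats). -/
open Filter

open Set in
private lemma aux_hasDerivAt_g {x : ℝ} (h1 : -1 < x) (h2 : x < 1) :
    HasDerivAt (fun t : ℝ => ((1+t) * Real.log (1+t) + (1-t) * Real.log (1-t)) / 2)
      ((Real.log (1+x) - Real.log (1-x)) / 2) x := by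
  have hp : (0:ℝ) < 1 + x := by linarith
  have hm : (0:ℝ) < 1 - x := by linarith
  have d1 : HasDerivAt (fun t : ℝ => 1 + t) 1 x := by
    simpa using (hasDerivAt_id x).const_add 1
  have d2 : HasDerivAt (fun t : ℝ => 1 - t) (-1) x := by
    simpa using (hasDerivAt_id x).const_sub 1
  have l1 : HasDerivAt (fun t : ℝ => Real.log (1+t)) (1/(1+x)) x := by
    simpa [Function.comp_def] using (Real.hasDerivAt_log hp.ne').comp x d1
  have l2 : HasDerivAt (fun t : ℝ => Real.log (1-t)) (-(1/(1-x))) x := by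
    have := (Real.hasDerivAt_log hm.ne').comp x d2
    simpa [div_eq_mul_inv, Function.comp_def] using this
  have := ((d1.mul l1).add (d2.mul l2)).div_const 2
  refine this.congr_deriv ?_
  field_simp
  ring

private lemma aux_hasDerivAt_d {x : ℝ} (h1 : -1 < x) (h2 : x < 1) :
    HasDerivAt (fun t : ℝ => -(Real.log (1 - t^2)) / 4)
      (x / (2 * (1 - x^2))) x := by
  have hq : (0:ℝ) < 1 - x^2 := by nlinarith
  have d1 : HasDerivAt (fun t : ℝ => 1 - t^2) (-(2*x)) x := by
    simpa using ((hasDerivAt_pow 2 x).const_sub 1)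
  have l1 : HasDerivAt (fun t : ℝ => Real.log (1 - t^2)) ((1/(1-x^2)) * (-(2*x))) x := by
    simpa [div_eq_mul_inv, Function.comp_def] using (Real.hasDerivAt_log hq.ne').comp x d1
  have := (l1.neg).div_const 4
  refine this.congr_deriv ?_
  field_simp
  ring

open Set in
private lemma aux_log_one_add_s11 : Tendsto (fun t : ℝ => Real.log (1+t) / t)
    (nhdsWithin 0 (Set.Ioi 0)) (nhds 1) := by
  have h : HasDerivAt (fun t : ℝ => Real.log (1+t)) 1 0 := by
    have d1 : HasDerivAt (fun t : ℝ => 1 + t) 1 (0:ℝ) := by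
      simpa using (hasDerivAt_id (0:ℝ)).const_add 1
    simpa [Function.comp_def] using (Real.hasDerivAt_log (by norm_num : (1:ℝ)+0 ≠ 0)).comp 0 d1
  have := hasDerivAt_iff_tendsto_slope.mp h
  have h2 : Tendsto (slope (fun t : ℝ => Real.log (1+t)) 0)
      (nhdsWithin 0 (Set.Ioi 0)) (nhds 1) :=
    this.mono_left (nhdsWithin_mono 0 (fun x hx => ne_of_gt hx))
  refine h2.congr' ?_
  filter_upwards [self_mem_nhdsWithin] with t ht
  simp [slope, inv_mul_eq_div]

open Set in
private lemma aux_log_one_sub_s11 : Tendsto (fun t : ℝ => Real.log (1-t) / t)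
    (nhdsWithin 0 (Set.Ioi 0)) (nhds (-1)) := by
  have d2 : HasDerivAt (fun t : ℝ => 1 - t) (-1) (0:ℝ) := by
    simpa using (hasDerivAt_id (0:ℝ)).const_sub 1
  have h : HasDerivAt (fun t : ℝ => Real.log (1-t)) (-1) 0 := by
    simpa [Function.comp_def] using (Real.hasDerivAt_log (by norm_num : (1:ℝ)-0 ≠ 0)).comp 0 d2
  have := hasDerivAt_iff_tendsto_slope.mp h
  have h2 : Tendsto (slope (fun t : ℝ => Real.log (1-t)) 0)
      (nhdsWithin 0 (Set.Ioi 0)) (nhds (-1)) :=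
    this.mono_left (nhdsWithin_mono 0 (fun x hx => ne_of_gt hx))
  refine h2.congr' ?_
  filter_upwards [self_mem_nhdsWithin] with t ht
  simp [slope, inv_mul_eq_div]

open Set in
private lemma aux_main : Tendsto
    (fun t : ℝ => (((1+t) * Real.log (1+t) + (1-t) * Real.log (1-t)) / 2)
      / (-(Real.log (1 - t^2)) / 4))
    (nhdsWithin 0 (Set.Ioi 0)) (nhds 2) := by
  apply HasDerivAt.lhopital_zero_right_on_Ioo (a := (0:ℝ)) (b := 1) one_pos
    (f' := fun x => (Real.log (1+x) - Real.log (1-x)) / 2)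
    (g' := fun x => x / (2 * (1 - x^2)))
  · intro x hx
    exact aux_hasDerivAt_g (by linarith [hx.1]) hx.2
  · intro x hx
    exact aux_hasDerivAt_d (by linarith [hx.1]) hx.2
  · intro x hx
    have hq : (0:ℝ) < 1 - x^2 := by nlinarith [hx.1, hx.2]
    have h2 : (0:ℝ) < 2*(1-x^2) := by linarith
    exact ne_of_gt (div_pos hx.1 h2)
  · have := (aux_hasDerivAt_g (by norm_num : (-1:ℝ) < 0) one_pos).continuousAt
    have h0 : (((1:ℝ)+0) * Real.log (1+0) + (1-0) * Real.log (1-0)) / 2 = 0 := by simp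
    simpa [h0] using this.continuousWithinAt.tendsto
  · have := (aux_hasDerivAt_d (by norm_num : (-1:ℝ) < 0) one_pos).continuousAt
    have h0 : -(Real.log (1 - (0:ℝ)^2)) / 4 = 0 := by simp
    simpa [h0] using this.continuousWithinAt.tendsto
  · -- g'/d' → 2
    have key : Tendsto (fun x : ℝ => (1 - x^2) * (Real.log (1+x)/x - Real.log (1-x)/x))
        (nhdsWithin 0 (Set.Ioi 0)) (nhds 2) := by
      have h1 : Tendsto (fun x : ℝ => 1 - x^2) (nhdsWithin 0 (Set.Ioi 0)) (nhds 1) := by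
        have : Tendsto (fun x : ℝ => 1 - x^2) (nhds 0) (nhds (1 - 0^2)) := by
          exact (continuous_const.sub (continuous_pow 2)).tendsto 0
        simpa using this.mono_left nhdsWithin_le_nhds
      have h2 := aux_log_one_add_s11.sub aux_log_one_sub_s11
      have := h1.mul h2
      norm_num at this
      exact this
    refine key.congr' ?_
    filter_upwards [Ioo_mem_nhdsGT_of_mem (Set.mem_Ico.mpr ⟨le_refl (0:ℝ), one_pos⟩)] with x hx
    have hx0 : x ≠ 0 := ne_of_gt hx.1
    have hq : (1:ℝ) - x^2 ≠ 0 := by nlinarith [hx.1, hx.2]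
    field_simp

open Set in
/-- For minimum-error discrimination of BPSK coherent states with cross-over
probability `ε(N_S) = (1 − √(1 − e^{−4N_S}))/2`, the induced binary symmetric
channel capacity `C₁ = ln 2 − h₂(ε)` (in nats) satisfies `C₁/N_S → 2`
as `N_S → 0⁺`. -/
theorem bpsk_dolinar_capacity_limit :
    Tendsto (fun N : ℝ =>
        (Real.log 2 - h₂ ((1 - Real.sqrt (1 - Real.exp (-4 * N))) / 2)) / N)
      (nhdsWithin 0 (Set.Ioi 0)) (nhds 2) := by
  -- F : the capacity expressed as a function of s = sqrt(1 - e^{-4N})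
  set F : ℝ → ℝ := fun t =>
    (Real.log 2 - h₂ ((1 - t) / 2)) / (-(Real.log (1 - t^2)) / 4) with hF
  -- Step 1: F tends to 2 along 0⁺
  have hFlim : Tendsto F (nhdsWithin 0 (Set.Ioi 0)) (nhds 2) := by
    refine aux_main.congr' ?_
    filter_upwards [Ioo_mem_nhdsGT_of_mem (Set.mem_Ico.mpr ⟨le_refl (0:ℝ), one_pos⟩)] with t ht
    have hm : (0:ℝ) < 1 - t := by linarith [ht.2]
    have hp : (0:ℝ) < 1 + t := by linarith [ht.1]
    have hnum : Real.log 2 - h₂ ((1 - t) / 2)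
        = ((1+t) * Real.log (1+t) + (1-t) * Real.log (1-t)) / 2 := by
      have e1 : (1:ℝ) - (1 - t)/2 = (1+t)/2 := by ring
      simp only [h₂, e1, Real.log_div hm.ne' two_ne_zero, Real.log_div hp.ne' two_ne_zero]
      ring
    rw [hF]
    simp only [hnum]
  -- Step 2: s tends to 0 within Ioi 0
  have hs : Tendsto (fun N : ℝ => Real.sqrt (1 - Real.exp (-4 * N)))
      (nhdsWithin 0 (Set.Ioi 0)) (nhdsWithin 0 (Set.Ioi 0)) := by
    apply tendsto_nhdsWithin_of_tendsto_nhds_of_eventually_within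
    · have : Tendsto (fun N : ℝ => Real.sqrt (1 - Real.exp (-4 * N))) (nhds 0)
          (nhds (Real.sqrt (1 - Real.exp (-4 * 0)))) := by
        exact (Real.continuous_sqrt.comp
          (continuous_const.sub (Real.continuous_exp.comp
            (continuous_const.mul continuous_id)))).tendsto 0
      simpa using this.mono_left nhdsWithin_le_nhds
    · filter_upwards [self_mem_nhdsWithin] with N hN
      have hN' : (0:ℝ) < N := hN
      have : Real.exp (-4 * N) < 1 := by
        rw [Real.exp_lt_one_iff]; linarith
      exact Real.sqrt_pos.mpr (by linarith)
  -- Step 3: the original function equals F ∘ s on Ioi 0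
  have := hFlim.comp hs
  refine this.congr' ?_
  filter_upwards [self_mem_nhdsWithin] with N hN
  have hN' : (0:ℝ) < N := hN
  have hle : Real.exp (-4 * N) ≤ 1 := by
    rw [Real.exp_le_one_iff]; linarith
  have hsq : Real.sqrt (1 - Real.exp (-4 * N)) ^ 2 = 1 - Real.exp (-4 * N) :=
    Real.sq_sqrt (by linarith)
  have hden : -(Real.log (1 - Real.sqrt (1 - Real.exp (-4 * N)) ^ 2)) / 4 = N := by
    rw [hsq]
    have : (1:ℝ) - (1 - Real.exp (-4 * N)) = Real.exp (-4 * N) := by ring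
    rw [this, Real.log_exp]
    ring
  simp only [Function.comp, hF, hden]
end

section
/- Hayashi–Nagaoka operator inequality: for operators 0 ≤ S ≤ I and T ≥ 0 on a Hilbert space, and any c > 0, I − (S+T)^{−1/2} S (S+T)^{−1/2} ≤ (1+c)(I − S) + (2 + c + c^{−1}) T, where the inverse is taken on the support of S+T. -/
open scoped ComplexOrder

namespace HNaux

open Matrix

variable {n : Type*} [Fintype n] [DecidableEq n]

/-- scalar multiple of a psd matrix by a nonneg real is psd -/
lemma psd_smul {A : Matrix n n ℂ} (hA : A.PosSemidef) {r : ℝ} (hr : 0 ≤ r) :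
    ((r : ℂ) • A).PosSemidef := by
  refine PosSemidef.of_dotProduct_mulVec_nonneg ?_ ?_
  · unfold Matrix.IsHermitian
    rw [conjTranspose_smul, hA.1]
    congr 1
    simp
  · intro x
    rw [smul_mulVec, dotProduct_smul, smul_eq_mul]
    exact mul_nonneg (by exact_mod_cast hr) (hA.dotProduct_mulVec_nonneg x)

/-- a matrix annihilating every vector is zero -/
lemma eq_zero_of_mulVec {A : Matrix n n ℂ} (h : ∀ v, A.mulVec v = 0) : A = 0 := by
  ext i j
  have := congrFun (h (Pi.single j 1)) i
  simpa [Matrix.mulVec_single] using this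

/-- if `A, B` are psd and `(A+B) v = 0` then `A v = 0`. -/
lemma mulVec_eq_zero_left {A B : Matrix n n ℂ} (hA : A.PosSemidef) (hB : B.PosSemidef)
    {v : n → ℂ} (hv : (A + B).mulVec v = 0) : A.mulVec v = 0 := by
  have h0 : star v ⬝ᵥ A *ᵥ v + star v ⬝ᵥ B *ᵥ v = 0 := by
    rw [← dotProduct_add, ← add_mulVec, hv, dotProduct_zero]
  have hle : star v ⬝ᵥ A *ᵥ v ≤ 0 := (le_add_of_nonneg_right (hB.dotProduct_mulVec_nonneg v)).trans_eq h0
  exact (hA.dotProduct_mulVec_zero_iff v).mp (le_antisymm hle (hA.dotProduct_mulVec_nonneg v))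

/-- monotonicity of the square root in Loewner order:
if `A, B ⪰ 0` and `B² − A² ⪰ 0` then `B − A ⪰ 0`. -/
lemma le_of_sq_le_sq {A B : Matrix n n ℂ} (hA : A.PosSemidef) (hB : B.PosSemidef)
    (h : (B * B - A * A).PosSemidef) : (B - A).PosSemidef := by
  have hC : (B - A).IsHermitian := hB.1.sub hA.1
  refine hC.posSemidef_iff_eigenvalues_nonneg.mpr ?_
  intro i
  by_contra hlt
  push_neg at hlt
  set t : ℝ := hC.eigenvalues i with ht
  set v : n → ℂ := ⇑(hC.eigenvectorBasis i) with hvdef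
  have hv' : (B - A) *ᵥ v = (t : ℂ) • v := by
    have h2 := hC.mulVec_eigenvectorBasis i
    rw [RCLike.real_smul_eq_coe_smul (K := ℂ)] at h2
    exact h2
  have hvne : v ≠ 0 := by
    have := (hC.eigenvectorBasis).orthonormal.ne_zero i
    intro hv0
    apply this
    ext j
    exact congrFun hv0 j
  -- the key computation
  have hkey : star v ⬝ᵥ (B * B - A * A) *ᵥ v
      = (t : ℂ) * (star v ⬝ᵥ A *ᵥ v + star v ⬝ᵥ B *ᵥ v) := by
    have hsplit : B * B - A * A = B * (B - A) + (B - A) * A := by noncomm_ring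
    calc star v ⬝ᵥ (B * B - A * A) *ᵥ v
        = star v ⬝ᵥ B *ᵥ (B - A) *ᵥ v + star v ⬝ᵥ (B - A) *ᵥ A *ᵥ v := by
          rw [hsplit, add_mulVec, dotProduct_add, mulVec_mulVec, mulVec_mulVec]
      _ = (t : ℂ) * (star v ⬝ᵥ B *ᵥ v) + star v ⬝ᵥ (B - A) *ᵥ A *ᵥ v := by
          rw [hv', mulVec_smul, dotProduct_smul, smul_eq_mul]
      _ = (t : ℂ) * (star v ⬝ᵥ B *ᵥ v) + star ((B - A) *ᵥ v) ⬝ᵥ A *ᵥ v := by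
          rw [star_mulVec, ← dotProduct_mulVec, hC.eq]
      _ = (t : ℂ) * (star v ⬝ᵥ A *ᵥ v + star v ⬝ᵥ B *ᵥ v) := by
          rw [hv']
          push_cast
          simp [star_smul, smul_dotProduct, smul_eq_mul]
          ring
  have hq : (0 : ℂ) ≤ (t : ℂ) * (star v ⬝ᵥ A *ᵥ v + star v ⬝ᵥ B *ᵥ v) := hkey ▸ h.dotProduct_mulVec_nonneg v
  have hsum0 : star v ⬝ᵥ A *ᵥ v + star v ⬝ᵥ B *ᵥ v = 0 := by
    set q : ℂ := star v ⬝ᵥ A *ᵥ v + star v ⬝ᵥ B *ᵥ v with hqdef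
    have hqn : (0 : ℂ) ≤ q := add_nonneg (hA.dotProduct_mulVec_nonneg v) (hB.dotProduct_mulVec_nonneg v)
    rw [Complex.le_def] at hqn hq
    obtain ⟨hre, him⟩ := hqn
    simp only [Complex.zero_re, Complex.zero_im] at hre him
    obtain ⟨hre2, -⟩ := hq
    rw [Complex.mul_re, Complex.ofReal_re, Complex.ofReal_im, Complex.zero_re] at hre2
    rw [← him] at hre2
    simp only [zero_mul, sub_zero] at hre2
    have : q.re = 0 := le_antisymm (nonpos_of_mul_nonneg_right hre2 hlt) hre
    exact Complex.ext this him.symm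
  have hA0 : A *ᵥ v = 0 := by
    apply (hA.dotProduct_mulVec_zero_iff v).mp
    have : star v ⬝ᵥ A *ᵥ v ≤ 0 := (le_add_of_nonneg_right (hB.dotProduct_mulVec_nonneg v)).trans_eq hsum0
    exact le_antisymm this (hA.dotProduct_mulVec_nonneg v)
  have hB0 : B *ᵥ v = 0 := by
    apply (hB.dotProduct_mulVec_zero_iff v).mp
    have : star v ⬝ᵥ B *ᵥ v ≤ 0 := (le_add_of_nonneg_left (hA.dotProduct_mulVec_nonneg v)).trans_eq hsum0
    exact le_antisymm this (hB.dotProduct_mulVec_nonneg v)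
  have : (t : ℂ) • v = 0 := by
    rw [← hv', sub_mulVec, hA0, hB0, sub_zero]
  rcases smul_eq_zero.mp this with h1 | h1
  · exact absurd (by exact_mod_cast h1 : t = 0) (ne_of_lt hlt)
  · exact hvne h1

open scoped MatrixOrder in
lemma exists_sqrt {A : Matrix n n ℂ} (hA : A.PosSemidef) :
    ∃ B : Matrix n n ℂ, B.PosSemidef ∧ B * B = A := by
  have h0 : (0 : Matrix n n ℂ) ≤ A := Matrix.nonneg_iff_posSemidef.mpr hA
  exact ⟨CFC.sqrt A, Matrix.nonneg_iff_posSemidef.mp (CFC.sqrt_nonneg A),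
    CFC.sqrt_mul_sqrt_self A h0⟩

end HNaux

open Matrix in
/-- **Hayashi–Nagaoka operator inequality.** Let `0 ≤ S ≤ I` and `T ≥ 0` be
operators, and let `R = (S+T)^{−1/2}` be the Moore–Penrose (generalized)
inverse square root of `S + T` (characterized by: `R` is positive
semidefinite, commutes with `S + T`, `R² (S+T)² = S+T`, and `R` vanishes on
the kernel of `S + T`).  Then for any `c > 0`,
`I − R S R ≤ (1+c)(I − S) + (2 + c + c⁻¹) T`. -/
theorem hayashi_nagaoka {n : Type*} [Fintype n] [DecidableEq n]
    (S T R : Matrix n n ℂ) (c : ℝ) (hc : 0 < c)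
    (hS : S.PosSemidef) (hS1 : (1 - S).PosSemidef) (hT : T.PosSemidef)
    (hR : R.PosSemidef)
    (hcomm : R * (S + T) = (S + T) * R)
    (hinv : R * R * (S + T) * (S + T) = S + T)
    (hker : ∀ v : n → ℂ, (S + T).mulVec v = 0 → R.mulVec v = 0) :
    ((1 + c : ℂ) • (1 - S) + ((2 + c + c⁻¹ : ℝ) : ℂ) • T -
      (1 - R * S * R)).PosSemidef := by
  have hM : (S + T).PosSemidef := hS.add hT
  obtain ⟨P, hPdef⟩ : ∃ P : Matrix n n ℂ, P = R * R * (S + T) := ⟨_, rfl⟩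
  have hR2M : R * R * (S + T) = (S + T) * (R * R) := by
    calc R * R * (S + T) = R * (R * (S + T)) := mul_assoc _ _ _
      _ = R * ((S + T) * R) := by rw [hcomm]
      _ = R * (S + T) * R := (mul_assoc _ _ _).symm
      _ = (S + T) * R * R := by rw [hcomm]
      _ = (S + T) * (R * R) := mul_assoc _ _ _
  have hPM : P * (S + T) = S + T := by rw [hPdef]; exact hinv
  have hMP : (S + T) * P = S + T := by
    rw [hPdef, ← mul_assoc, ← hR2M, hinv]
  have hPherm : Pᴴ = P := by
    rw [hPdef, Matrix.conjTranspose_mul, Matrix.conjTranspose_mul, hR.1.eq, hM.1.eq]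
    exact hR2M.symm
  have hPP : P * P = P := by
    nth_rewrite 1 [hPdef]
    rw [mul_assoc, hMP]
    exact hPdef.symm
  -- kernel facts
  have hMQ : (S + T) * (1 - P) = 0 := by rw [mul_sub, mul_one, hMP, sub_self]
  have hQker : ∀ v : n → ℂ, (S + T).mulVec ((1 - P).mulVec v) = 0 := fun v => by
    rw [Matrix.mulVec_mulVec, hMQ, Matrix.zero_mulVec]
  have hSQ : S * (1 - P) = 0 := HNaux.eq_zero_of_mulVec fun v => by
    rw [← Matrix.mulVec_mulVec]; exact HNaux.mulVec_eq_zero_left hS hT (hQker v)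
  have hTQ : T * (1 - P) = 0 := HNaux.eq_zero_of_mulVec fun v => by
    rw [← Matrix.mulVec_mulVec]
    exact HNaux.mulVec_eq_zero_left hT hS (by rw [add_comm]; exact hQker v)
  have hRQ : R * (1 - P) = 0 := HNaux.eq_zero_of_mulVec fun v => by
    rw [← Matrix.mulVec_mulVec]; exact hker _ (hQker v)
  have hSP : S * P = S := by
    have h0 := hSQ; rw [mul_sub, mul_one, sub_eq_zero] at h0; exact h0.symm
  have hTP : T * P = T := by
    have h0 := hTQ; rw [mul_sub, mul_one, sub_eq_zero] at h0; exact h0.symm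
  have hRP : R * P = R := by
    have h0 := hRQ; rw [mul_sub, mul_one, sub_eq_zero] at h0; exact h0.symm
  have hPS : P * S = S := by
    have h0 := congrArg Matrix.conjTranspose hSP
    rwa [Matrix.conjTranspose_mul, hPherm, hS.1.eq] at h0
  have hPT : P * T = T := by
    have h0 := congrArg Matrix.conjTranspose hTP
    rwa [Matrix.conjTranspose_mul, hPherm, hT.1.eq] at h0
  have hPR : P * R = R := by
    have h0 := congrArg Matrix.conjTranspose hRP
    rwa [Matrix.conjTranspose_mul, hPherm, hR.1.eq] at h0
  -- the square root `V = R * (S + T)` of `S + T`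
  have hP' : R * (S + T) * R = P := by
    rw [hcomm, mul_assoc, ← hR2M]
    exact hPdef.symm
  have hVpsd : (R * (S + T)).PosSemidef := by
    have h0 := hR.mul_mul_conjTranspose_same (R * (S + T))
    have he : R * (S + T) * R * (R * (S + T))ᴴ = R * (S + T) := by
      rw [Matrix.conjTranspose_mul, hM.1.eq, hR.1.eq, hP', ← mul_assoc, hPM, ← hcomm]
    rwa [he] at h0
  have hVV : (R * (S + T)) * (R * (S + T)) = S + T := by
    rw [← mul_assoc, hP', hPM]
  -- `S - S * S` is psd
  have hSsub : (S - S * S).PosSemidef := by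
    obtain ⟨Bs, hBs, hBB⟩ := HNaux.exists_sqrt hS
    have h0 := hS1.mul_mul_conjTranspose_same Bs
    have hB : Bs * Bs = S := hBB
    have hBH : Bsᴴ = Bs := hBs.1.eq
    have he : Bs * (1 - S) * Bsᴴ = S - S * S := by
      rw [hBH, mul_sub, mul_one, sub_mul, hB]
      congr 1
      calc Bs * S * Bs = Bs * (Bs * Bs) * Bs := by rw [hB]
        _ = (Bs * Bs) * (Bs * Bs) := by noncomm_ring
        _ = S * S := by rw [hB]
    rwa [he] at h0
  -- `V - S` is psd : the square-root-monotonicity step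
  have hVS : (R * (S + T) - S).PosSemidef := by
    apply HNaux.le_of_sq_le_sq hS hVpsd
    have he : (R * (S + T)) * (R * (S + T)) - S * S = (S - S * S) + T := by
      rw [hVV]; abel
    rw [he]
    exact hSsub.add hT
  -- psd of `1 - P`
  have hQpsd : ((1 : Matrix n n ℂ) - P).PosSemidef := by
    have h0 := (Matrix.PosSemidef.one (n := n) (R := ℂ)).mul_mul_conjTranspose_same (1 - P)
    have he : ((1 : Matrix n n ℂ) - P) * 1 * (1 - P)ᴴ = 1 - P := by
      rw [mul_one, Matrix.conjTranspose_sub, Matrix.conjTranspose_one, hPherm, mul_sub,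
        mul_one, sub_mul, one_mul, hPP]
      abel
    rwa [he] at h0
  -- psd of the two conjugation terms
  have hArm : (R - P)ᴴ = R - P := by
    rw [Matrix.conjTranspose_sub, hPherm, hR.1.eq]
  have hASA : ((R - P) * S * (R - P)).PosSemidef := by
    have h0 := hS.mul_mul_conjTranspose_same (R - P)
    rwa [hArm] at h0
  obtain ⟨Z, hZdef⟩ : ∃ Z : Matrix n n ℂ, Z = (c : ℂ) • R - ((1 + c : ℂ)) • P := ⟨_, rfl⟩
  have hZherm : Zᴴ = Z := by
    rw [hZdef, Matrix.conjTranspose_sub, Matrix.conjTranspose_smul,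
      Matrix.conjTranspose_smul, hPherm, hR.1.eq]
    congr 1
    · congr 1
      simp [Complex.star_def, Complex.conj_ofReal]
    · congr 1
      simp [Complex.star_def]
  have hZTZ : (Z * T * Z).PosSemidef := by
    have h0 := hT.mul_mul_conjTranspose_same Z
    rwa [hZherm] at h0
  -- expansion identities
  have hRSP : R * S * P = R * S := by rw [mul_assoc, hSP]
  have hPSR : P * S * R = S * R := by rw [hPS]
  have hPSP : P * S * P = S := by rw [hPS, hSP]
  have hRTP : R * T * P = R * T := by rw [mul_assoc, hTP]
  have hPTR : P * T * R = T * R := by rw [hPT]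
  have hPTP : P * T * P = T := by rw [hPT, hTP]
  have e1 : (R - P) * S * (R - P) = R * S * R - R * S - S * R + S := by
    calc (R - P) * S * (R - P)
        = R * S * R - R * S * P - (P * S * R - P * S * P) := by noncomm_ring
      _ = R * S * R - R * S - S * R + S := by rw [hRSP, hPSR, hPSP]; abel
  have e2 : Z * T * Z = (c * c : ℂ) • (R * T * R) - (c * (1 + c) : ℂ) • (R * T)
      - (c * (1 + c) : ℂ) • (T * R) + ((1 + c) * (1 + c) : ℂ) • T := by
    calc Z * T * Z
        = (c * c : ℂ) • (R * T * R) - (c * (1 + c) : ℂ) • (R * T * P)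
          - (c * (1 + c) : ℂ) • (P * T * R) + ((1 + c) * (1 + c) : ℂ) • (P * T * P) := by
          rw [hZdef]
          simp only [sub_mul, mul_sub, Matrix.smul_mul, Matrix.mul_smul, smul_smul, smul_sub]
          module
      _ = _ := by rw [hRTP, hPTR, hPTP]
  have e3 : R * T * R = P - R * S * R := by
    have h0 : R * S * R + R * T * R = P := by
      calc R * S * R + R * T * R = R * (S + T) * R := by noncomm_ring
        _ = P := hP'
    rw [← h0]; abel
  have e4 : R * (S + T) = R * S + R * T := mul_add R S T
  have eRT : R * T = S * R + T * R - R * S := by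
    have h0 : R * S + R * T = S * R + T * R := by
      have h1 := hcomm
      rw [mul_add, add_mul] at h1
      exact h1
    rw [← h0]; abel
  have hc0 : (c : ℂ) ≠ 0 := by
    simp only [ne_eq, Complex.ofReal_eq_zero]
    exact ne_of_gt hc
  -- the key decomposition
  have key : (1 + c : ℂ) • (1 - S) + ((2 + c + c⁻¹ : ℝ) : ℂ) • T - (1 - R * S * R)
      = (c : ℂ) • (1 - P) + (2 + 2 * c : ℂ) • (R * (S + T) - S)
        + (1 + c : ℂ) • ((R - P) * S * (R - P)) + (c : ℂ)⁻¹ • (Z * T * Z) := by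
    rw [e1, e2, e3, e4, eRT]
    push_cast
    match_scalars <;> field_simp <;> ring
  rw [key]
  have k1 := HNaux.psd_smul hQpsd hc.le
  have k2 := HNaux.psd_smul hVS (by linarith : (0:ℝ) ≤ 2 + 2 * c)
  rw [show ((2 + 2 * c : ℝ) : ℂ) = (2 + 2 * c : ℂ) by push_cast; ring] at k2
  have k3 := HNaux.psd_smul hASA (by linarith : (0:ℝ) ≤ 1 + c)
  rw [show ((1 + c : ℝ) : ℂ) = (1 + c : ℂ) by push_cast; ring] at k3
  have k4 := HNaux.psd_smul hZTZ (le_of_lt (inv_pos.mpr hc))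
  rw [show ((c⁻¹ : ℝ) : ℂ) = (c : ℂ)⁻¹ by push_cast; ring] at k4
  exact ((k1.add k2).add k3).add k4
end
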